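/- arXiv:2508.11799 — 2 statements merged into one kernel-verified Lean document; each statement's English description precedes it below -/
import Mathlib

section
/- Let Uᵢ = {Γᵢ z : zᵀSᵢz ≤ τᵢ} and Uⱼ = {Γⱼ z : zᵀSⱼz ≤ τⱼ} be ellipsoidal sets (Sᵢ, Sⱼ positive definite, τᵢ, τⱼ ≥ 0), and let Aᵢ ∈ ℝ^{p×nᵢ}, Aⱼ ∈ ℝ^{p×nⱼ} with rows a_m^{(i)}, a_m^{(j)}. Define μᵢ, μⱼ ∈ ℝ^p by (μᵢ)_m = √τᵢ‖Sᵢ^{-1/2}Γᵢᵀ a_m^{(i)}‖₂ and (μⱼ)_m = √τⱼ‖Sⱼ^{-1/2}Γⱼᵀ a_m^{(j)}‖₂. Then sup over ζᵢ ∈ Uᵢ, ζⱼ ∈ Uⱼ of ‖Aᵢζᵢ − Aⱼζⱼ‖₂ is at most ‖μᵢ + μⱼ‖₂. -/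
open Matrix

open scoped MatrixOrder in
lemma ell_key {k : ℕ} {S : Matrix (Fin k) (Fin k) ℝ} (hS : S.PosDef) {τ : ℝ}
    (b z : Fin k → ℝ) (hz : z ⬝ᵥ (S *ᵥ z) ≤ τ) :
    |b ⬝ᵥ z| ≤ Real.sqrt τ * Real.sqrt (b ⬝ᵥ (S⁻¹ *ᵥ b)) := by
  set R := CFC.sqrt S with hRdef
  have hRR : R * R = S := CFC.sqrt_mul_sqrt_self S hS.posSemidef.nonneg
  have hRsym : Rᵀ = R := by
    have : R.IsHermitian := (Matrix.nonneg_iff_posSemidef.mp (CFC.sqrt_nonneg S)).1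
    rwa [Matrix.IsHermitian, Matrix.conjTranspose_eq_transpose_of_trivial] at this
  have hUnit : IsUnit R := by
    rw [Matrix.isUnit_iff_isUnit_det]
    have : R.det * R.det = S.det := by rw [← Matrix.det_mul, hRR]
    have hd : R.det ≠ 0 := by
      intro h; rw [h, mul_zero] at this; exact hS.det_pos.ne' this.symm
    exact hd.isUnit
  set c := R⁻¹ *ᵥ b with hc
  set w := R *ᵥ z with hw
  have h1 : b ⬝ᵥ z = c ⬝ᵥ w := by
    rw [hw, Matrix.dotProduct_mulVec, ← Matrix.mulVec_transpose, hRsym, hc,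
      Matrix.mulVec_mulVec, Matrix.mul_nonsing_inv R (Matrix.isUnit_iff_isUnit_det R |>.mp hUnit),
      Matrix.one_mulVec]
  have h2 : z ⬝ᵥ (S *ᵥ z) = w ⬝ᵥ w := by
    rw [← hRR, ← Matrix.mulVec_mulVec, Matrix.dotProduct_mulVec, ← Matrix.mulVec_transpose,
      hRsym, ← hw]
  have h3 : c ⬝ᵥ c = b ⬝ᵥ (S⁻¹ *ᵥ b) := by
    rw [hc, Matrix.dotProduct_mulVec, ← Matrix.mulVec_transpose,
      Matrix.transpose_nonsing_inv, hRsym, Matrix.mulVec_mulVec, ← Matrix.mul_inv_rev, hRR, dotProduct_comm]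
  have hww : w ⬝ᵥ w ≤ τ := h2 ▸ hz
  have hcs : (b ⬝ᵥ z) ^ 2 ≤ (c ⬝ᵥ c) * (w ⬝ᵥ w) := by
    rw [h1]
    simpa [dotProduct, pow_two, mul_comm] using
      Finset.sum_mul_sq_le_sq_mul_sq Finset.univ c w
  have hcc : 0 ≤ c ⬝ᵥ c := Finset.sum_nonneg fun i _ => mul_self_nonneg _
  have hww0 : 0 ≤ w ⬝ᵥ w := Finset.sum_nonneg fun i _ => mul_self_nonneg _
  calc |b ⬝ᵥ z| = Real.sqrt ((b ⬝ᵥ z) ^ 2) := (Real.sqrt_sq_eq_abs _).symm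
    _ ≤ Real.sqrt ((c ⬝ᵥ c) * (w ⬝ᵥ w)) := Real.sqrt_le_sqrt hcs
    _ ≤ Real.sqrt ((b ⬝ᵥ (S⁻¹ *ᵥ b)) * τ) := by
        apply Real.sqrt_le_sqrt
        rw [← h3]
        exact mul_le_mul_of_nonneg_left hww hcc
    _ = Real.sqrt τ * Real.sqrt (b ⬝ᵥ (S⁻¹ *ᵥ b)) := by
        rw [mul_comm, Real.sqrt_mul (le_trans hww0 hww)]

/-- Two-ellipsoid deviation bound (Proposition 3): with `Uᵢ = {Γᵢ z : zᵀ Sᵢ z ≤ τᵢ}`,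
`Uⱼ = {Γⱼ z : zᵀ Sⱼ z ≤ τⱼ}` and `(μᵢ)ₘ = √τᵢ √(aₘ⁽ⁱ⁾ᵀ Γᵢ Sᵢ⁻¹ Γᵢᵀ aₘ⁽ⁱ⁾)` (similarly μⱼ),
`sup_{ζᵢ∈Uᵢ, ζⱼ∈Uⱼ} ‖Aᵢζᵢ − Aⱼζⱼ‖₂ ≤ ‖μᵢ + μⱼ‖₂`. -/
theorem stmt6 {p ni nj ki kj : ℕ}
    (Si : Matrix (Fin ki) (Fin ki) ℝ) (hSi : Si.PosDef)
    (Sj : Matrix (Fin kj) (Fin kj) ℝ) (hSj : Sj.PosDef)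
    (τi τj : ℝ) (hτi : 0 ≤ τi) (hτj : 0 ≤ τj)
    (Γi : Matrix (Fin ni) (Fin ki) ℝ) (Γj : Matrix (Fin nj) (Fin kj) ℝ)
    (Ai : Matrix (Fin p) (Fin ni) ℝ) (Aj : Matrix (Fin p) (Fin nj) ℝ)
    (μi μj : Fin p → ℝ)
    (hμi : ∀ m, μi m = Real.sqrt τi *
      Real.sqrt ((Γiᵀ *ᵥ Ai m) ⬝ᵥ (Si⁻¹ *ᵥ (Γiᵀ *ᵥ Ai m))))
    (hμj : ∀ m, μj m = Real.sqrt τj *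
      Real.sqrt ((Γjᵀ *ᵥ Aj m) ⬝ᵥ (Sj⁻¹ *ᵥ (Γjᵀ *ᵥ Aj m)))) :
    sSup {y : ℝ | ∃ zi : Fin ki → ℝ, ∃ zj : Fin kj → ℝ,
        zi ⬝ᵥ (Si *ᵥ zi) ≤ τi ∧ zj ⬝ᵥ (Sj *ᵥ zj) ≤ τj ∧
        y = Real.sqrt (∑ i, ((Ai *ᵥ (Γi *ᵥ zi)) i - (Aj *ᵥ (Γj *ᵥ zj)) i) ^ 2)} ≤
      Real.sqrt (∑ m, (μi m + μj m) ^ 2) := by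
  apply Real.sSup_le
  · rintro y ⟨zi, zj, hzi, hzj, rfl⟩
    apply Real.sqrt_le_sqrt
    apply Finset.sum_le_sum
    intro m _
    have hμim : 0 ≤ μi m := by
      rw [hμi m]; positivity
    have hμjm : 0 ≤ μj m := by
      rw [hμj m]; positivity
    have hi : |(Ai *ᵥ (Γi *ᵥ zi)) m| ≤ μi m := by
      have : (Ai *ᵥ (Γi *ᵥ zi)) m = (Γiᵀ *ᵥ Ai m) ⬝ᵥ zi := by
        simp [Matrix.mulVec, Matrix.dotProduct_mulVec, ← Matrix.mulVec_transpose]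
      rw [this, hμi m]
      exact ell_key hSi _ _ hzi
    have hj : |(Aj *ᵥ (Γj *ᵥ zj)) m| ≤ μj m := by
      have : (Aj *ᵥ (Γj *ᵥ zj)) m = (Γjᵀ *ᵥ Aj m) ⬝ᵥ zj := by
        simp [Matrix.mulVec, Matrix.dotProduct_mulVec, ← Matrix.mulVec_transpose]
      rw [this, hμj m]
      exact ell_key hSj _ _ hzj
    have habs : |(Ai *ᵥ (Γi *ᵥ zi)) m - (Aj *ᵥ (Γj *ᵥ zj)) m| ≤ μi m + μj m :=
      (abs_sub _ _).trans (add_le_add hi hj)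
    exact sq_le_sq' (neg_le_of_abs_le habs |>.trans_eq' rfl |> fun h => by linarith [abs_le.mp habs])
      (le_of_abs_le habs)
  · positivity
end

section
/- (S-lemma direction used for robust convex norm constraints) Let S be symmetric positive definite on ℝⁿ, τ > 0, M ∈ ℝ^{d×n}, b ∈ ℝ^d, c > 0. If there exists α ≥ 0 such that the block matrix [[αS, 0, Mᵀ],[0, c² − ατ, bᵀ],[M, b, I_d]] is positive semidefinite, then ‖Mz + b‖₂ ≤ c for all z with zᵀSz ≤ τ. -/
open Matrix

/-- Sufficient S-lemma/Schur-complement direction: if for some `α ≥ 0` the block matrix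
`[[αS, 0, Mᵀ], [0, c² − ατ, bᵀ], [M, b, I]]` is positive semidefinite, then
`‖Mz + b‖₂ ≤ c` for all `z` with `zᵀ S z ≤ τ`. -/
theorem stmt8 {n d : ℕ} (S : Matrix (Fin n) (Fin n) ℝ) (hS : S.PosDef)
    (τ : ℝ) (hτ : 0 < τ) (M : Matrix (Fin d) (Fin n) ℝ) (b : Fin d → ℝ)
    (c : ℝ) (hc : 0 < c)
    (h : ∃ α : ℝ, 0 ≤ α ∧
      (Matrix.fromBlocks
        (Matrix.fromBlocks (α • S) 0 0 (Matrix.of fun (_ : Fin 1) (_ : Fin 1) => c ^ 2 - α * τ))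
        (Matrix.of fun (x : Fin n ⊕ Fin 1) (j : Fin d) =>
          Sum.elim (fun i => M j i) (fun _ => b j) x)
        (Matrix.of fun (j : Fin d) (x : Fin n ⊕ Fin 1) =>
          Sum.elim (fun i => M j i) (fun _ => b j) x)
        (1 : Matrix (Fin d) (Fin d) ℝ)).PosSemidef) :
    ∀ z : Fin n → ℝ, z ⬝ᵥ (S *ᵥ z) ≤ τ →
      Real.sqrt (∑ i, ((M *ᵥ z) i + b i) ^ 2) ≤ c := by
  obtain ⟨α, hα, hpsd⟩ := h
  intro z hz
  set v : Fin d → ℝ := fun j => (M *ᵥ z) j + b j with hv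
  have key := hpsd.dotProduct_mulVec_nonneg (Sum.elim (Sum.elim z (fun _ => (1:ℝ))) (fun j => -v j))
  simp only [star_trivial, Matrix.fromBlocks_mulVec, sumElim_dotProduct_sumElim] at key
  simp only [Sum.elim_comp_inl, Sum.elim_comp_inr, Matrix.zero_mulVec, Matrix.one_mulVec,
    add_zero, zero_add, Pi.add_apply, Sum.elim_inl, Sum.elim_inr, Fintype.sum_sum_type,
    Fin.sum_univ_one, Matrix.mulVec, dotProduct, Matrix.smul_apply, Matrix.of_apply,
    smul_eq_mul] at key
  -- key : 0 ≤ ∑ x, z x * (∑ x1, α * S x x1 * z x1 + ∑ j, M j x * -v j)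
  --          + 1 * ((c^2 - α*τ) * 1 + ∑ j, b j * -v j)
  --          + ∑ j, -v j * (∑ x1, M j x1 * z x1 + b j * 1 + -v j)
  have h1 : ∑ x : Fin n, z x * (∑ x1 : Fin n, α * S x x1 * z x1 + ∑ j : Fin d, M j x * -v j)
      = α * (z ⬝ᵥ S *ᵥ z) - ∑ j, v j * (M *ᵥ z) j := by
    simp only [mul_add, Finset.sum_add_distrib, dotProduct, Matrix.mulVec,
      Finset.mul_sum]
    rw [Finset.sum_comm (f := fun x j => z x * (M j x * -v j))]
    rw [sub_eq_add_neg, ← Finset.sum_neg_distrib]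
    congr 1
    · exact Finset.sum_congr rfl fun x _ => Finset.sum_congr rfl fun i _ => by ring
    · refine Finset.sum_congr rfl fun j _ => ?_
      rw [← Finset.sum_neg_distrib]
      exact Finset.sum_congr rfl fun x _ => by ring
  have h3 : ∑ j : Fin d, -v j * (∑ x1 : Fin n, M j x1 * z x1 + b j * 1 + -v j) = 0 := by
    refine Finset.sum_eq_zero fun j _ => ?_
    simp only [hv, Matrix.mulVec, dotProduct]
    ring
  have h4 : ∑ j, v j * (M *ᵥ z) j + ∑ j, b j * v j = ∑ i, v i ^ 2 := by
    rw [← Finset.sum_add_distrib]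
    refine Finset.sum_congr rfl fun j _ => ?_
    simp only [hv]; ring
  rw [h1, h3] at key
  have hzα : α * (z ⬝ᵥ S *ᵥ z) ≤ α * τ := mul_le_mul_of_nonneg_left hz hα
  have hsum : ∑ i, v i ^ 2 ≤ c ^ 2 := by
    rw [← h4]
    simp only [mul_neg, Finset.sum_neg_distrib, mul_one] at key
    linarith
  calc Real.sqrt (∑ i, ((M *ᵥ z) i + b i) ^ 2) = Real.sqrt (∑ i, v i ^ 2) := rfl
    _ ≤ Real.sqrt (c ^ 2) := Real.sqrt_le_sqrt hsum
    _ = c := Real.sqrt_sq hc.le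
end
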